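/- With W + ΔyV := b6(1 - b1 x)(1 - b4 x)(t - b6 x), W - ΔyV := (1 - b2 x)(1 - b3 x)(b6 t - x), R + ΔuS := (b6 q t - x)/b6, and R - ΔuS := (q t - b6 x), the compatibility identity ((W+ΔyV)/(W-ΔyV))(x; qt) · ((R+ΔuS)/(R-ΔuS))(x; t) = ((W+ΔyV)/(W-ΔyV))(x; t) · ((R+ΔuS)/(R-ΔuS))(qx; t) holds as an identity of rational functions in x, t, q, b1, b2, b3, b4, b6 (wherever all denominators are nonzero). -/

import Mathlib

/-- `(W+ΔyV)(x;t) = b₆(1-b₁x)(1-b₄x)(t-b₆x)`. -/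
def Wp (b1 b4 b6 x t : ℂ) : ℂ := b6 * (1 - b1 * x) * (1 - b4 * x) * (t - b6 * x)

/-- `(W-ΔyV)(x;t) = (1-b₂x)(1-b₃x)(b₆t-x)`. -/
def Wm (b2 b3 b6 x t : ℂ) : ℂ := (1 - b2 * x) * (1 - b3 * x) * (b6 * t - x)

/-- `(R+ΔuS)(x;t) = (b₆qt - x)/b₆`. -/
noncomputable def Rp (q b6 x t : ℂ) : ℂ := (b6 * q * t - x) / b6

/-- `(R-ΔuS)(x;t) = qt - b₆x`. -/
def Rm (q b6 x t : ℂ) : ℂ := q * t - b6 * x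

/-- Compatibility of the spectral and deformation data polynomials:
`((W+ΔyV)/(W-ΔyV))(x;qt)·((R+ΔuS)/(R-ΔuS))(x;t)
  = ((W+ΔyV)/(W-ΔyV))(x;t)·((R+ΔuS)/(R-ΔuS))(qx;t)`. -/
theorem WV_RS_compatibility (q t x b1 b2 b3 b4 b6 : ℂ) (hb6 : b6 ≠ 0)
    (h1 : Wm b2 b3 b6 x (q * t) ≠ 0) (h2 : Rm q b6 x t ≠ 0)
    (h3 : Wm b2 b3 b6 x t ≠ 0) (h4 : Rm q b6 (q * x) t ≠ 0) :
    (Wp b1 b4 b6 x (q * t) / Wm b2 b3 b6 x (q * t)) * (Rp q b6 x t / Rm q b6 x t)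
      = (Wp b1 b4 b6 x t / Wm b2 b3 b6 x t) * (Rp q b6 (q * x) t / Rm q b6 (q * x) t) := by
  unfold Wp Wm Rp Rm at *
  rw [div_mul_div_comm, div_mul_div_comm, div_eq_div_iff (mul_ne_zero h1 h2) (mul_ne_zero h3 h4)]
  field_simp
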